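/- For μ a Borel probability measure on [0,1], let m(μ) = ∫₀¹ a dμ(a) and define J(μ, ã) = ã if m(μ) ≤ 1/2 and J(μ, ã) = −ã if m(μ) > 1/2, for ã ∈ [0,1]. Then there is no Borel probability measure μ on [0,1] such that every ã in the topological support of μ satisfies J(μ, ã) = sup_{b ∈ [0,1]} J(μ, b). In particular, the one-step mean-field game of Example 2 admits no relaxed equilibrium. -/
import Mathlib


open Set MeasureTheory
open scoped ENNReal

/-- The topological support of a measure on `ℝ`: the set of points all of whose
neighborhoods have positive measure. -/
def measSupport (μ : Measure ℝ) : Set ℝ := {x | ∀ U ∈ nhds x, μ U ≠ 0}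

/-- The mean action `m(μ) = ∫ a dμ(a)` of an action distribution `μ`. -/
noncomputable def meanAction (μ : Measure ℝ) : ℝ := ∫ a, a ∂μ

/-- The discontinuous value of the representative player in Example 2:
`J(μ, b) = b` if `m(μ) ≤ 1/2` and `J(μ, b) = −b` if `m(μ) > 1/2`. -/
noncomputable def Jex2 (μ : Measure ℝ) (b : ℝ) : ℝ :=
  if meanAction μ ≤ 1/2 then b else -b

/-- The complement of the topological support of a measure on `ℝ` is null. -/
lemma compl_measSupport_null (μ : Measure ℝ) : μ (measSupport μ)ᶜ = 0 := by
  apply measure_null_of_locally_null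
  intro x hx
  simp only [measSupport, mem_compl_iff, mem_setOf_eq, not_forall] at hx
  obtain ⟨U, hU, hU0⟩ := hx
  push_neg at hU0
  exact ⟨U, nhdsWithin_le_nhds hU, hU0⟩

/-- the one-step mean-field game of Example 2 admits no relaxed
equilibrium: there is no Borel probability measure `μ` on `[0,1]` such that every
action in its topological support maximizes `Jex2 μ` over `[0,1]`. -/
theorem stmt7 :
    ¬ ∃ μ : Measure ℝ, IsProbabilityMeasure μ ∧ μ (Icc (0:ℝ) 1) = 1 ∧
      ∀ a ∈ measSupport μ, Jex2 μ a = ⨆ b : Icc (0:ℝ) 1, Jex2 μ b := by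
  rintro ⟨μ, hprob, hIcc, hmax⟩
  by_cases hm : meanAction μ ≤ 1/2
  · -- J b = b, sup = 1, support ⊆ {1}, so a.e. a = 1, mean = 1, contradiction
    have hJ : ∀ b, Jex2 μ b = b := fun b => if_pos hm
    have hsup : (⨆ b : Icc (0:ℝ) 1, Jex2 μ b) = 1 := by
      apply le_antisymm
      · apply ciSup_le
        intro b
        rw [hJ]
        exact b.2.2
      · refine le_ciSup_of_le ⟨1, ?_⟩ (⟨1, by norm_num⟩ : Icc (0:ℝ) 1) ?_
        · rintro y ⟨b, rfl⟩
          simp only [hJ]; exact b.2.2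
        · rw [hJ]
    have hsupp : measSupport μ ⊆ {1} := by
      intro a ha
      have := hmax a ha
      rw [hJ, hsup] at this
      exact this
    have hae : μ ({1}ᶜ : Set ℝ) = 0 :=
      measure_mono_null (compl_subset_compl.2 hsupp) (compl_measSupport_null μ)
    have hmean : meanAction μ = 1 := by
      have h1 : (fun a : ℝ => a) =ᵐ[μ] fun _ => (1:ℝ) := by
        filter_upwards [(mem_ae_iff (s := ({1} : Set ℝ))).2 (by simpa using hae)] with a ha
        simpa using ha
      calc meanAction μ = ∫ a, (1:ℝ) ∂μ := integral_congr_ae h1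
        _ = 1 := by simp
    rw [hmean] at hm; norm_num at hm
  · -- J b = -b, sup = 0, support ⊆ {0}, mean = 0, contradiction with m > 1/2
    push_neg at hm
    have hJ : ∀ b, Jex2 μ b = -b := fun b => if_neg (not_le.2 hm)
    have hsup : (⨆ b : Icc (0:ℝ) 1, Jex2 μ b) = 0 := by
      apply le_antisymm
      · apply ciSup_le
        intro b
        rw [hJ]
        simpa using b.2.1
      · refine le_ciSup_of_le ⟨0, ?_⟩ (⟨0, by norm_num⟩ : Icc (0:ℝ) 1) ?_
        · rintro y ⟨b, rfl⟩
          simp only [hJ]; simpa using b.2.1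
        · rw [hJ]; norm_num
    have hsupp : measSupport μ ⊆ {0} := by
      intro a ha
      have := hmax a ha
      rw [hJ, hsup] at this
      simpa [neg_eq_zero] using this
    have hae : μ ({0}ᶜ : Set ℝ) = 0 :=
      measure_mono_null (compl_subset_compl.2 hsupp) (compl_measSupport_null μ)
    have hmean : meanAction μ = 0 := by
      have h1 : (fun a : ℝ => a) =ᵐ[μ] fun _ => (0:ℝ) := by
        filter_upwards [(mem_ae_iff (s := ({0} : Set ℝ))).2 (by simpa using hae)] with a ha
        simpa using ha
      calc meanAction μ = ∫ a, (0:ℝ) ∂μ := integral_congr_ae h1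
        _ = 0 := by simp
    rw [hmean] at hm; norm_num at hm
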